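/- Let λ > 0 and let β, β̂ : [0,T] → ℝ be continuous with β(t) ≥ λ and β̂(t) ≥ λ for all t. If a single C¹ function u : [0,T] → ℝ⁹ is simultaneously a solution of the SEIR-like system with transmission parameter β and a solution with transmission parameter β̂ (with the same other parameter functions and the same initial condition x₀), then β(t) = β̂(t) for all t ∈ [0,T]. In other words, the parameter-to-solution map β ↦ u is injective. -/
import Mathlib


open Set Filter MeasureTheory

/-- Right-hand side of the SEIR-like system. Components are indexed `0,…,8`,
corresponding to `x₁,…,x₉` (S, V, E, I_A, I_M, I_S, I_C, R, D). -/
noncomputable def seirRHS (a b c sigma p : ℝ) (beta nu gA gM gS gC aS aC dD : ℝ → ℝ)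
    (t : ℝ) (x : Fin 9 → ℝ) : Fin 9 → ℝ :=
  ![-(x 0) * beta t * (c * x 3 + x 4 + a * x 5 + b * x 6) - nu t * x 0,
    nu t * x 0,
    x 0 * beta t * (c * x 3 + x 4 + a * x 5 + b * x 6) - sigma * x 2,
    (1 - p) * sigma * x 2 - gA t * x 3,
    p * sigma * x 2 - (gM t + aS t) * x 4,
    aS t * x 4 - (gS t + aC t) * x 5,
    aC t * x 5 - (gC t + dD t) * x 6,
    gA t * x 3 + gM t * x 4 + gS t * x 5 + gC t * x 6,
    dD t * x 6]

/-- `u` is a (C¹) solution of the SEIR-like system on the set `J` with initial value `x₀`. -/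
noncomputable def IsSEIRSolOn (a b c sigma p : ℝ) (beta nu gA gM gS gC aS aC dD : ℝ → ℝ)
    (x₀ : Fin 9 → ℝ) (u : ℝ → Fin 9 → ℝ) (J : Set ℝ) : Prop :=
  u 0 = x₀ ∧
  ∀ i : Fin 9, ∀ t ∈ J,
    HasDerivWithinAt (fun s => u s i)
      (seirRHS a b c sigma p beta nu gA gM gS gC aS aC dD t (u t) i) J t

/-- The derivative of the squared negative part. -/
lemma negpart_sq_hasDerivAt (x : ℝ) :
    HasDerivAt (fun y : ℝ => (min y 0)^2) (2 * min x 0) x := by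
  rcases lt_trichotomy x 0 with hx | hx | hx
  · have h : HasDerivAt (fun y : ℝ => y^2) (2*x) x := by
      simpa using (hasDerivAt_pow 2 x)
    rw [min_eq_left hx.le]
    apply h.congr_of_eventuallyEq
    filter_upwards [Iio_mem_nhds hx] with y hy
    rw [min_eq_left (le_of_lt hy)]
  · subst hx
    have h0 : (2:ℝ) * min 0 0 = 0 := by norm_num
    rw [h0, hasDerivAt_iff_isLittleO]
    simp only [zero_sub, smul_zero, sub_zero, min_self, ne_eq]
    rw [Asymptotics.isLittleO_iff]
    intro c hc
    filter_upwards [eventually_abs_sub_lt 0 hc] with y hy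
    simp only [sub_zero] at hy ⊢
    have h1 : (min y 0)^2 ≤ y^2 := by
      rcases le_or_gt y 0 with h | h
      · rw [min_eq_left h]
      · rw [min_eq_right h.le]; simpa using sq_nonneg y
    calc ‖(min y 0)^2 - 0^2‖ ≤ y^2 := by
          rw [Real.norm_eq_abs]
          have : (0:ℝ)^2 = 0 := by norm_num
          rw [this, sub_zero, abs_of_nonneg (sq_nonneg _)]
          exact h1
      _ = |y| * |y| := by rw [← abs_mul, ← sq, abs_of_nonneg (sq_nonneg _)]
      _ ≤ c * ‖y‖ := by
          apply mul_le_mul_of_nonneg_right hy.le (abs_nonneg _)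
  · rw [min_eq_right hx.le, mul_zero]
    apply (hasDerivAt_const x (0:ℝ)).congr_of_eventuallyEq
    filter_upwards [Ioi_mem_nhds hx] with y hy
    rw [min_eq_right (le_of_lt hy)]
    norm_num

lemma min_mul_self' (x : ℝ) : min x 0 * x = (min x 0)^2 := by
  rcases le_or_gt x 0 with h|h
  · rw [min_eq_left h]; ring
  · rw [min_eq_right h.le]; ring

lemma expmul_hasDerivAt (k t : ℝ) :
    HasDerivAt (fun s => Real.exp (k*s)) (k * Real.exp (k*t)) t := by
  simpa [mul_comm] using ((hasDerivAt_id t).const_mul k).exp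

lemma pos_of_mul_exp {x e : ℝ} (he : 0 < e) (h : 0 < x * e) : 0 < x := by
  nlinarith

set_option maxHeartbeats 1000000 in
/-- The key dissipativity estimate used in the Grönwall argument proving that all
relevant components of the solution stay nonnegative. -/
lemma seir_key_ineq (a b c sigma p B : ℝ)
    (bet nuv gAv gMS aSv gSC aCv gCD : ℝ)
    (u0 u2 u3 u4 u5 u6 Q : ℝ)
    (ha : 0 < a) (hb : 0 < b) (hc : 0 < c) (hs : 0 < sigma) (hp0 : 0 < p) (hp1 : p < 1)
    (hbet : 0 < bet) (hgA : 0 < gAv) (hgMS : 0 < gMS) (haS : 0 < aSv) (haSB : aSv ≤ B)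
    (hgSC : 0 < gSC) (haC : 0 < aCv) (haCB : aCv ≤ B) (hgCD : 0 < gCD)
    (hQ : Q = c*u3 + u4 + a*u5 + b*u6)
    (h1 : |bet*Q + nuv| ≤ B) (h2 : |bet*Q| ≤ B) (h3 : bet*(u0 - min u0 0) ≤ B) :
    2*min u0 0*(-u0*bet*Q - nuv*u0) + 2*min u2 0*(u0*bet*Q - sigma*u2)
    + 2*min u3 0*((1-p)*sigma*u2 - gAv*u3) + 2*min u4 0*(p*sigma*u2 - gMS*u4)
    + 2*min u5 0*(aSv*u4 - gSC*u5) + 2*min u6 0*(aCv*u5 - gCD*u6)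
    ≤ (2*B*(c+a+b+5) + 4*sigma) *
      ((min u0 0)^2 + (min u2 0)^2 + (min u3 0)^2 + (min u4 0)^2 + (min u5 0)^2 + (min u6 0)^2) := by
  have hB0 : 0 ≤ B := le_of_lt (lt_of_lt_of_le haS haSB)
  set m0 := min u0 0 with hm0
  set m2 := min u2 0 with hm2
  set m3 := min u3 0 with hm3
  set m4 := min u4 0 with hm4
  set m5 := min u5 0 with hm5
  set m6 := min u6 0 with hm6
  set F := m0^2 + m2^2 + m3^2 + m4^2 + m5^2 + m6^2 with hF
  have hFnn : 0 ≤ F := by positivity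
  have e0 : m0 * u0 = m0^2 := min_mul_self' u0
  have e2 : m2 * u2 = m2^2 := min_mul_self' u2
  have e3 : m3 * u3 = m3^2 := min_mul_self' u3
  have e4 : m4 * u4 = m4^2 := min_mul_self' u4
  have e5 : m5 * u5 = m5^2 := min_mul_self' u5
  have e6 : m6 * u6 = m6^2 := min_mul_self' u6
  have l0 : m0 ≤ 0 := min_le_right _ _
  have l2 : m2 ≤ 0 := min_le_right _ _
  have l3 : m3 ≤ 0 := min_le_right _ _
  have l4 : m4 ≤ 0 := min_le_right _ _
  have l5 : m5 ≤ 0 := min_le_right _ _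
  have l6 : m6 ≤ 0 := min_le_right _ _
  have g0 : m0 ≤ u0 := min_le_left _ _
  have g2 : m2 ≤ u2 := min_le_left _ _
  have g3 : m3 ≤ u3 := min_le_left _ _
  have g4 : m4 ≤ u4 := min_le_left _ _
  have g5 : m5 ≤ u5 := min_le_left _ _
  have g6 : m6 ≤ u6 := min_le_left _ _
  have pr : ∀ x y : ℝ, x ≤ 0 → y ≤ 0 → x^2 ≤ F → y^2 ≤ F → 0 ≤ x*y ∧ x*y ≤ F := by
    intro x y hx hy hx2 hy2
    constructor
    · have := mul_nonneg (neg_nonneg.2 hx) (neg_nonneg.2 hy)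
      linarith [this]
    · linarith [sq_nonneg (x - y)]
  have sq0 : m0^2 ≤ F := by linarith [hF, sq_nonneg m2, sq_nonneg m3, sq_nonneg m4, sq_nonneg m5, sq_nonneg m6]
  have sq2 : m2^2 ≤ F := by linarith [hF, sq_nonneg m0, sq_nonneg m3, sq_nonneg m4, sq_nonneg m5, sq_nonneg m6]
  have sq3 : m3^2 ≤ F := by linarith [hF, sq_nonneg m0, sq_nonneg m2, sq_nonneg m4, sq_nonneg m5, sq_nonneg m6]
  have sq4 : m4^2 ≤ F := by linarith [hF, sq_nonneg m0, sq_nonneg m2, sq_nonneg m3, sq_nonneg m5, sq_nonneg m6]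
  have sq5 : m5^2 ≤ F := by linarith [hF, sq_nonneg m0, sq_nonneg m2, sq_nonneg m3, sq_nonneg m4, sq_nonneg m6]
  have sq6 : m6^2 ≤ F := by linarith [hF, sq_nonneg m0, sq_nonneg m2, sq_nonneg m3, sq_nonneg m4, sq_nonneg m5]
  obtain ⟨p23n, p23⟩ := pr m2 m3 l2 l3 sq2 sq3
  obtain ⟨p24n, p24⟩ := pr m2 m4 l2 l4 sq2 sq4
  obtain ⟨p25n, p25⟩ := pr m2 m5 l2 l5 sq2 sq5
  obtain ⟨p26n, p26⟩ := pr m2 m6 l2 l6 sq2 sq6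
  obtain ⟨p20n, p20⟩ := pr m2 m0 l2 l0 sq2 sq0
  obtain ⟨p32n, p32⟩ := pr m3 m2 l3 l2 sq3 sq2
  obtain ⟨p42n, p42⟩ := pr m4 m2 l4 l2 sq4 sq2
  obtain ⟨p54n, p54⟩ := pr m5 m4 l5 l4 sq5 sq4
  obtain ⟨p65n, p65⟩ := pr m6 m5 l6 l5 sq6 sq5
  obtain ⟨habs1, habs1'⟩ := abs_le.mp h1
  obtain ⟨habs2, habs2'⟩ := abs_le.mp h2
  have hP : 0 ≤ bet*(u0 - m0) := mul_nonneg hbet.le (by linarith)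
  have t0 : 2*m0*(-u0*bet*Q - nuv*u0) ≤ 2*B*F := by
    have e : 2*m0*(-u0*bet*Q - nuv*u0) = -2*(bet*Q + nuv)*(m0*u0) := by ring
    rw [e, e0]
    linarith [mul_le_mul_of_nonneg_right (show -(bet*Q+nuv) ≤ B by linarith) (sq_nonneg m0),
      mul_le_mul_of_nonneg_left sq0 hB0]
  have t2 : 2*m2*(u0*bet*Q - sigma*u2) ≤ 2*B*(c+a+b+2)*F := by
    have hQL : c*m3 + m4 + a*m5 + b*m6 ≤ Q := by rw [hQ]; gcongr
    have hm2P : m2 * (bet*(u0-m0)) ≤ 0 := mul_nonpos_of_nonpos_of_nonneg l2 hP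
    have h2a : m2 * (bet*(u0-m0)) * Q ≤ m2 * (bet*(u0-m0)) * (c*m3 + m4 + a*m5 + b*m6) :=
      mul_le_mul_of_nonpos_left hQL hm2P
    have hSnn : 0 ≤ c*(m2*m3) + (m2*m4) + a*(m2*m5) + b*(m2*m6) := by
      have i1 := mul_nonneg hc.le p23n
      have i2 := mul_nonneg ha.le p25n
      have i3 := mul_nonneg hb.le p26n
      linarith
    have hSle : c*(m2*m3) + (m2*m4) + a*(m2*m5) + b*(m2*m6) ≤ (c+a+b+1)*F := by
      have i1 := mul_le_mul_of_nonneg_left p23 hc.le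
      have i2 := mul_le_mul_of_nonneg_left p25 ha.le
      have i3 := mul_le_mul_of_nonneg_left p26 hb.le
      linarith
    have h2b : m2 * (bet*(u0-m0)) * (c*m3 + m4 + a*m5 + b*m6) ≤ B*((c+a+b+1)*F) := by
      have e : m2 * (bet*(u0-m0)) * (c*m3 + m4 + a*m5 + b*m6)
          = (bet*(u0-m0)) * (c*(m2*m3) + (m2*m4) + a*(m2*m5) + b*(m2*m6)) := by ring
      rw [e]
      exact mul_le_mul h3 hSle hSnn hB0
    have h2c : m2 * m0 * (bet*Q) ≤ B*F := by
      calc m2 * m0 * (bet*Q) ≤ m2 * m0 * B := mul_le_mul_of_nonneg_left habs2' p20n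
        _ ≤ F * B := mul_le_mul_of_nonneg_right p20 hB0
        _ = B * F := by ring
    have hsplit : 2*m2*(u0*bet*Q - sigma*u2)
        = 2*(m2*(bet*(u0-m0))*Q) + 2*(m2*m0*(bet*Q)) - 2*sigma*(m2*u2) := by ring
    rw [hsplit, e2]
    have hs2 : 0 ≤ 2*sigma*m2^2 := by positivity
    linarith [h2a.trans h2b, h2c]
  have t3 : 2*m3*((1-p)*sigma*u2 - gAv*u3) ≤ 2*sigma*F := by
    have hmu : m3*u2 ≤ m3*m2 := mul_le_mul_of_nonpos_left g2 l3
    have e : 2*m3*((1-p)*sigma*u2 - gAv*u3) = 2*(1-p)*sigma*(m3*u2) - 2*gAv*(m3*u3) := by ring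
    rw [e, e3]
    have hps : (0:ℝ) ≤ 2*(1-p)*sigma := mul_nonneg (by linarith) hs.le
    have hA := mul_le_mul_of_nonneg_left (hmu.trans p32) hps
    have hB2 : 2*(1-p)*sigma*F ≤ 2*sigma*F := by
      have := mul_nonneg (mul_nonneg hp0.le hs.le) hFnn
      linarith
    have hC : 0 ≤ 2*gAv*m3^2 := by positivity
    linarith
  have t4 : 2*m4*(p*sigma*u2 - gMS*u4) ≤ 2*sigma*F := by
    have hmu : m4*u2 ≤ m4*m2 := mul_le_mul_of_nonpos_left g2 l4
    have e : 2*m4*(p*sigma*u2 - gMS*u4) = 2*p*sigma*(m4*u2) - 2*gMS*(m4*u4) := by ring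
    rw [e, e4]
    have hps : (0:ℝ) ≤ 2*p*sigma := by positivity
    have hA := mul_le_mul_of_nonneg_left (hmu.trans p42) hps
    have hB2 : 2*p*sigma*F ≤ 2*sigma*F := by
      have := mul_nonneg (mul_nonneg (by linarith : (0:ℝ) ≤ 1-p) hs.le) hFnn
      linarith
    have hC : 0 ≤ 2*gMS*m4^2 := by positivity
    linarith
  have t5 : 2*m5*(aSv*u4 - gSC*u5) ≤ 2*B*F := by
    have hmu : m5*u4 ≤ m5*m4 := mul_le_mul_of_nonpos_left g4 l5
    have e : 2*m5*(aSv*u4 - gSC*u5) = 2*aSv*(m5*u4) - 2*gSC*(m5*u5) := by ring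
    rw [e, e5]
    have hA := mul_le_mul_of_nonneg_left (hmu.trans p54) (by linarith : (0:ℝ) ≤ 2*aSv)
    have hB2 := mul_le_mul_of_nonneg_right haSB hFnn
    have hC : 0 ≤ 2*gSC*m5^2 := by positivity
    linarith
  have t6 : 2*m6*(aCv*u5 - gCD*u6) ≤ 2*B*F := by
    have hmu : m6*u5 ≤ m6*m5 := mul_le_mul_of_nonpos_left g5 l6
    have e : 2*m6*(aCv*u5 - gCD*u6) = 2*aCv*(m6*u5) - 2*gCD*(m6*u6) := by ring
    rw [e, e6]
    have hA := mul_le_mul_of_nonneg_left (hmu.trans p65) (by linarith : (0:ℝ) ≤ 2*aCv)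
    have hB2 := mul_le_mul_of_nonneg_right haCB hFnn
    have hC : 0 ≤ 2*gCD*m6^2 := by positivity
    linarith
  have efin : (2*B*(c+a+b+5) + 4*sigma) * F
      = 2*B*F + 2*B*(c+a+b+2)*F + 2*sigma*F + 2*sigma*F + 2*B*F + 2*B*F := by ring
  rw [efin]
  linarith [t0, t2, t3, t4, t5, t6]

/-- the parameter-to-solution map is injective: if the same function `u` solves
the system for two transmission parameters `β, β̂ ≥ λ > 0`, then `β = β̂` on `[0,T]`. -/
theorem seir_parameter_injective
    (T a b c sigma p : ℝ) (hT : 0 < T) (ha : 0 < a) (hb : 0 < b) (hc : 0 < c)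
    (hsigma : 0 < sigma) (hp0 : 0 < p) (hp1 : p < 1)
    (nu gA gM gS gC aS aC dD : ℝ → ℝ)
    (hcont : ∀ f ∈ [nu, gA, gM, gS, gC, aS, aC, dD], ContinuousOn f (Icc 0 T))
    (hpos : ∀ f ∈ [nu, gA, gM, gS, gC, aS, aC, dD], ∀ t ∈ Icc (0:ℝ) T, 0 < f t)
    (x₀ : Fin 9 → ℝ) (hx₀ : ∀ i, 0 ≤ x₀ i) (hx₀1 : 0 < x₀ 0) (hx₀3 : 0 < x₀ 2)
    (lam : ℝ) (hlam : 0 < lam) (beta betah : ℝ → ℝ)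
    (hbeta : ContinuousOn beta (Icc 0 T)) (hbetah : ContinuousOn betah (Icc 0 T))
    (hbetage : ∀ t ∈ Icc (0:ℝ) T, lam ≤ beta t) (hbetahge : ∀ t ∈ Icc (0:ℝ) T, lam ≤ betah t)
    (u : ℝ → Fin 9 → ℝ)
    (hu : IsSEIRSolOn a b c sigma p beta nu gA gM gS gC aS aC dD x₀ u (Icc 0 T))
    (hu' : IsSEIRSolOn a b c sigma p betah nu gA gM gS gC aS aC dD x₀ u (Icc 0 T)) :
    ∀ t ∈ Icc (0:ℝ) T, beta t = betah t := by
  obtain ⟨hu0, hud⟩ := hu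
  obtain ⟨-, hud'⟩ := hu'
  have h0J : (0:ℝ) ∈ Icc (0:ℝ) T := ⟨le_rfl, hT.le⟩
  -- coefficient functions: positivity & continuity
  have hnu : ∀ t ∈ Icc (0:ℝ) T, 0 < nu t := hpos nu (by simp)
  have hgA : ∀ t ∈ Icc (0:ℝ) T, 0 < gA t := hpos gA (by simp)
  have hgM : ∀ t ∈ Icc (0:ℝ) T, 0 < gM t := hpos gM (by simp)
  have hgS : ∀ t ∈ Icc (0:ℝ) T, 0 < gS t := hpos gS (by simp)
  have hgC : ∀ t ∈ Icc (0:ℝ) T, 0 < gC t := hpos gC (by simp)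
  have haS : ∀ t ∈ Icc (0:ℝ) T, 0 < aS t := hpos aS (by simp)
  have haC : ∀ t ∈ Icc (0:ℝ) T, 0 < aC t := hpos aC (by simp)
  have hdD : ∀ t ∈ Icc (0:ℝ) T, 0 < dD t := hpos dD (by simp)
  have hcnu : ContinuousOn nu (Icc 0 T) := hcont nu (by simp)
  have hcgA : ContinuousOn gA (Icc 0 T) := hcont gA (by simp)
  have hcaS : ContinuousOn aS (Icc 0 T) := hcont aS (by simp)
  have hcaC : ContinuousOn aC (Icc 0 T) := hcont aC (by simp)
  have hbpos : ∀ t ∈ Icc (0:ℝ) T, 0 < beta t := fun t ht => lt_of_lt_of_le hlam (hbetage t ht)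
  -- continuity of solution components
  have hucont : ∀ i : Fin 9, ContinuousOn (fun s => u s i) (Icc 0 T) :=
    fun i t ht => (hud i t ht).continuousWithinAt
  have hQcont : ContinuousOn (fun t => c * u t 3 + u t 4 + a * u t 5 + b * u t 6) (Icc 0 T) :=
    (((continuousOn_const.mul (hucont 3)).add (hucont 4)).add
      (continuousOn_const.mul (hucont 5))).add (continuousOn_const.mul (hucont 6))
  -- a uniform bound `B` for all the quantities needed in the Grönwall estimate
  have hhcont : ContinuousOn (fun t =>
      |beta t * (c * u t 3 + u t 4 + a * u t 5 + b * u t 6) + nu t|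
      + |beta t * (c * u t 3 + u t 4 + a * u t 5 + b * u t 6)|
      + beta t * (u t 0 - min (u t 0) 0) + aS t + aC t + gA t) (Icc 0 T) := by
    have c1 : ContinuousOn (fun t => beta t * (c * u t 3 + u t 4 + a * u t 5 + b * u t 6))
        (Icc 0 T) := hbeta.mul hQcont
    exact ((((c1.add hcnu).abs.add c1.abs).add
      (hbeta.mul ((hucont 0).sub ((hucont 0).inf continuousOn_const)))).add hcaS).add
      hcaC |>.add hcgA
  obtain ⟨B, hB⟩ := isCompact_Icc.exists_bound_of_continuousOn hhcont
  have hBfacts : ∀ t ∈ Icc (0:ℝ) T,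
      |beta t * (c * u t 3 + u t 4 + a * u t 5 + b * u t 6) + nu t| ≤ B
      ∧ |beta t * (c * u t 3 + u t 4 + a * u t 5 + b * u t 6)| ≤ B
      ∧ beta t * (u t 0 - min (u t 0) 0) ≤ B ∧ aS t ≤ B ∧ aC t ≤ B ∧ gA t ≤ B := by
    intro t ht
    have hb1 := hB t ht
    rw [Real.norm_eq_abs] at hb1
    have hle := le_trans (le_abs_self _) hb1
    have ha1 := abs_nonneg (beta t * (c * u t 3 + u t 4 + a * u t 5 + b * u t 6) + nu t)
    have ha2 := abs_nonneg (beta t * (c * u t 3 + u t 4 + a * u t 5 + b * u t 6))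
    have hmle : min (u t 0) 0 ≤ u t 0 := min_le_left _ _
    have h3 : 0 ≤ beta t * (u t 0 - min (u t 0) 0) :=
      mul_nonneg (hbpos t ht).le (by linarith)
    have h4 := haS t ht
    have h5 := haC t ht
    have h6 := hgA t ht
    exact ⟨by linarith, by linarith, by linarith, by linarith, by linarith, by linarith⟩
  have hB0 : 0 ≤ B := le_trans (haS 0 h0J).le (hBfacts 0 h0J).2.2.2.1
  -- the derivatives of the relevant components
  have hd0 : ∀ t ∈ Icc (0:ℝ) T, HasDerivWithinAt (fun s => u s 0)
      (-(u t 0) * beta t * (c * u t 3 + u t 4 + a * u t 5 + b * u t 6) - nu t * u t 0)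
      (Icc 0 T) t := fun t ht => hud 0 t ht
  have hd2 : ∀ t ∈ Icc (0:ℝ) T, HasDerivWithinAt (fun s => u s 2)
      (u t 0 * beta t * (c * u t 3 + u t 4 + a * u t 5 + b * u t 6) - sigma * u t 2)
      (Icc 0 T) t := fun t ht => hud 2 t ht
  have hd3 : ∀ t ∈ Icc (0:ℝ) T, HasDerivWithinAt (fun s => u s 3)
      ((1 - p) * sigma * u t 2 - gA t * u t 3) (Icc 0 T) t := fun t ht => hud 3 t ht
  have hd4 : ∀ t ∈ Icc (0:ℝ) T, HasDerivWithinAt (fun s => u s 4)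
      (p * sigma * u t 2 - (gM t + aS t) * u t 4) (Icc 0 T) t := fun t ht => hud 4 t ht
  have hd5 : ∀ t ∈ Icc (0:ℝ) T, HasDerivWithinAt (fun s => u s 5)
      (aS t * u t 4 - (gS t + aC t) * u t 5) (Icc 0 T) t := fun t ht => hud 5 t ht
  have hd6 : ∀ t ∈ Icc (0:ℝ) T, HasDerivWithinAt (fun s => u s 6)
      (aC t * u t 5 - (gC t + dD t) * u t 6) (Icc 0 T) t := fun t ht => hud 6 t ht
  -- Grönwall's inequality for the sum of squared negative parts
  have hfd : ∀ t ∈ Icc (0:ℝ) T, HasDerivWithinAt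
      (fun s => (min (u s 0) 0)^2 + (min (u s 2) 0)^2 + (min (u s 3) 0)^2
        + (min (u s 4) 0)^2 + (min (u s 5) 0)^2 + (min (u s 6) 0)^2)
      (2*min (u t 0) 0 * (-(u t 0) * beta t * (c * u t 3 + u t 4 + a * u t 5 + b * u t 6)
          - nu t * u t 0)
        + 2*min (u t 2) 0 * (u t 0 * beta t * (c * u t 3 + u t 4 + a * u t 5 + b * u t 6)
          - sigma * u t 2)
        + 2*min (u t 3) 0 * ((1 - p) * sigma * u t 2 - gA t * u t 3)
        + 2*min (u t 4) 0 * (p * sigma * u t 2 - (gM t + aS t) * u t 4)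
        + 2*min (u t 5) 0 * (aS t * u t 4 - (gS t + aC t) * u t 5)
        + 2*min (u t 6) 0 * (aC t * u t 5 - (gC t + dD t) * u t 6)) (Icc 0 T) t := by
    intro t ht
    exact ((((((negpart_sq_hasDerivAt (u t 0)).comp_hasDerivWithinAt t (hd0 t ht)).add
      ((negpart_sq_hasDerivAt (u t 2)).comp_hasDerivWithinAt t (hd2 t ht))).add
      ((negpart_sq_hasDerivAt (u t 3)).comp_hasDerivWithinAt t (hd3 t ht))).add
      ((negpart_sq_hasDerivAt (u t 4)).comp_hasDerivWithinAt t (hd4 t ht))).add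
      ((negpart_sq_hasDerivAt (u t 5)).comp_hasDerivWithinAt t (hd5 t ht))).add
      ((negpart_sq_hasDerivAt (u t 6)).comp_hasDerivWithinAt t (hd6 t ht))
  have hu0e : ∀ i : Fin 9, u 0 i = x₀ i := fun i => congrFun hu0 i
  have hgron := le_gronwallBound_of_liminf_deriv_right_le (a := 0) (b := T) (δ := 0)
      (K := 2*B*(c+a+b+5) + 4*sigma) (ε := 0)
      (f := fun s => (min (u s 0) 0)^2 + (min (u s 2) 0)^2 + (min (u s 3) 0)^2
        + (min (u s 4) 0)^2 + (min (u s 5) 0)^2 + (min (u s 6) 0)^2)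
      (f' := fun t => 2*min (u t 0) 0 * (-(u t 0) * beta t
          * (c * u t 3 + u t 4 + a * u t 5 + b * u t 6) - nu t * u t 0)
        + 2*min (u t 2) 0 * (u t 0 * beta t * (c * u t 3 + u t 4 + a * u t 5 + b * u t 6)
          - sigma * u t 2)
        + 2*min (u t 3) 0 * ((1 - p) * sigma * u t 2 - gA t * u t 3)
        + 2*min (u t 4) 0 * (p * sigma * u t 2 - (gM t + aS t) * u t 4)
        + 2*min (u t 5) 0 * (aS t * u t 4 - (gS t + aC t) * u t 5)
        + 2*min (u t 6) 0 * (aC t * u t 5 - (gC t + dD t) * u t 6))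
      (fun t ht => (hfd t ht).continuousWithinAt)
      (by
        intro x hx r hr
        have hIci : HasDerivWithinAt _ _ (Ici x) x :=
          (hfd x ⟨hx.1, hx.2.le⟩).mono_of_mem_nhdsWithin
            (mem_nhdsWithin.2 ⟨Iio T, isOpen_Iio, hx.2,
              fun y hy => ⟨le_trans hx.1 hy.2, hy.1.le⟩⟩)
        exact hIci.liminf_right_slope_le hr)
      (by
        simp only [hu0e]
        rw [min_eq_right (hx₀ 0), min_eq_right (hx₀ 2), min_eq_right (hx₀ 3),
          min_eq_right (hx₀ 4), min_eq_right (hx₀ 5), min_eq_right (hx₀ 6)]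
        norm_num)
      (by
        intro t ht
        have htJ : t ∈ Icc (0:ℝ) T := ⟨ht.1, ht.2.le⟩
        obtain ⟨k1, k2, k3, k4, k5, k6⟩ := hBfacts t htJ
        have key := seir_key_ineq a b c sigma p B (beta t) (nu t) (gA t) (gM t + aS t)
          (aS t) (gS t + aC t) (aC t) (gC t + dD t)
          (u t 0) (u t 2) (u t 3) (u t 4) (u t 5) (u t 6)
          (c * u t 3 + u t 4 + a * u t 5 + b * u t 6)
          ha hb hc hsigma hp0 hp1 (hbpos t htJ) (hgA t htJ)
          (add_pos (hgM t htJ) (haS t htJ)) (haS t htJ) k4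
          (add_pos (hgS t htJ) (haC t htJ)) (haC t htJ) k5
          (add_pos (hgC t htJ) (hdD t htJ)) rfl k1 k2 k3
        calc _ ≤ (2*B*(c+a+b+5) + 4*sigma) *
              ((min (u t 0) 0)^2 + (min (u t 2) 0)^2 + (min (u t 3) 0)^2
                + (min (u t 4) 0)^2 + (min (u t 5) 0)^2 + (min (u t 6) 0)^2) := by
              convert key using 2 <;> ring
          _ ≤ _ := by simp)
  -- all (relevant) components are nonnegative
  have hnn : ∀ t ∈ Icc (0:ℝ) T, 0 ≤ u t 0 ∧ 0 ≤ u t 2 ∧ 0 ≤ u t 3 ∧ 0 ≤ u t 4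
      ∧ 0 ≤ u t 5 ∧ 0 ≤ u t 6 := by
    intro t ht
    have h1 : (min (u t 0) 0)^2 + (min (u t 2) 0)^2 + (min (u t 3) 0)^2
        + (min (u t 4) 0)^2 + (min (u t 5) 0)^2 + (min (u t 6) 0)^2
        ≤ gronwallBound 0 (2*B*(c+a+b+5) + 4*sigma) 0 (t - 0) := hgron t ht
    rw [gronwallBound_ε0_δ0] at h1
    have e : ∀ x : ℝ, (min x 0)^2 ≤ 0 → 0 ≤ x := by
      intro x hx
      have h2 : min x 0 = 0 := by nlinarith [sq_nonneg (min x 0)]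
      exact min_eq_right_iff.mp h2
    have s0 := sq_nonneg (min (u t 0) 0)
    have s2 := sq_nonneg (min (u t 2) 0)
    have s3 := sq_nonneg (min (u t 3) 0)
    have s4 := sq_nonneg (min (u t 4) 0)
    have s5 := sq_nonneg (min (u t 5) 0)
    have s6 := sq_nonneg (min (u t 6) 0)
    exact ⟨e _ (by linarith), e _ (by linarith), e _ (by linarith), e _ (by linarith),
      e _ (by linarith), e _ (by linarith)⟩
  have hQnn : ∀ t ∈ Icc (0:ℝ) T, 0 ≤ c * u t 3 + u t 4 + a * u t 5 + b * u t 6 := by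
    intro t ht
    obtain ⟨-, -, n3, n4, n5, n6⟩ := hnn t ht
    have i1 := mul_nonneg hc.le n3
    have i2 := mul_nonneg ha.le n5
    have i3 := mul_nonneg hb.le n6
    linarith
  have hexpc : ∀ k : ℝ, ContinuousOn (fun t : ℝ => Real.exp (k*t)) (Icc 0 T) :=
    fun k => (Real.continuous_exp.comp (continuous_const.mul continuous_id)).continuousOn
  -- strict positivity of the susceptible component
  have hu0pos : ∀ t ∈ Icc (0:ℝ) T, 0 < u t 0 := by
    have hmono : MonotoneOn (fun t => u t 0 * Real.exp (B * t)) (Icc 0 T) := by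
      apply monotoneOn_of_hasDerivWithinAt_nonneg (convex_Icc 0 T)
        ((hucont 0).mul (hexpc B))
        (f' := fun t => (-(u t 0) * beta t * (c * u t 3 + u t 4 + a * u t 5 + b * u t 6)
          - nu t * u t 0) * Real.exp (B*t) + u t 0 * (B * Real.exp (B*t)))
      · intro x hx
        rw [interior_Icc] at hx ⊢
        exact ((hd0 x (Ioo_subset_Icc_self hx)).mono Ioo_subset_Icc_self).mul
          (expmul_hasDerivAt B x).hasDerivWithinAt
      · intro x hx
        rw [interior_Icc] at hx
        have hxJ := Ioo_subset_Icc_self hx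
        obtain ⟨k1, -, -, -, -, -⟩ := hBfacts x hxJ
        obtain ⟨n0, -, -, -, -, -⟩ := hnn x hxJ
        have habs := (abs_le.mp k1).2
        have he := Real.exp_pos (B*x)
        have erw : (-(u x 0) * beta x * (c * u x 3 + u x 4 + a * u x 5 + b * u x 6)
            - nu x * u x 0) * Real.exp (B*x) + u x 0 * (B * Real.exp (B*x))
            = (u x 0 * (B - (beta x * (c * u x 3 + u x 4 + a * u x 5 + b * u x 6) + nu x)))
              * Real.exp (B*x) := by ring
        rw [erw]
        exact mul_nonneg (mul_nonneg n0 (by linarith)) he.le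
    intro t ht
    have h1 := hmono h0J ht ht.1
    have h2 : 0 < u 0 0 * Real.exp (B*0) := by
      rw [hu0e 0]
      positivity
    exact pos_of_mul_exp (Real.exp_pos (B*t)) (lt_of_lt_of_le h2 h1)
  -- strict positivity of the exposed component
  have hu2pos : ∀ t ∈ Icc (0:ℝ) T, 0 < u t 2 := by
    have hmono : MonotoneOn (fun t => u t 2 * Real.exp (sigma * t)) (Icc 0 T) := by
      apply monotoneOn_of_hasDerivWithinAt_nonneg (convex_Icc 0 T)
        ((hucont 2).mul (hexpc sigma))
        (f' := fun t => (u t 0 * beta t * (c * u t 3 + u t 4 + a * u t 5 + b * u t 6)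
          - sigma * u t 2) * Real.exp (sigma*t) + u t 2 * (sigma * Real.exp (sigma*t)))
      · intro x hx
        rw [interior_Icc] at hx ⊢
        exact ((hd2 x (Ioo_subset_Icc_self hx)).mono Ioo_subset_Icc_self).mul
          (expmul_hasDerivAt sigma x).hasDerivWithinAt
      · intro x hx
        rw [interior_Icc] at hx
        have hxJ := Ioo_subset_Icc_self hx
        obtain ⟨n0, -, -, -, -, -⟩ := hnn x hxJ
        have hQ := hQnn x hxJ
        have he := Real.exp_pos (sigma*x)
        have erw : (u x 0 * beta x * (c * u x 3 + u x 4 + a * u x 5 + b * u x 6)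
            - sigma * u x 2) * Real.exp (sigma*x) + u x 2 * (sigma * Real.exp (sigma*x))
            = (u x 0 * beta x * (c * u x 3 + u x 4 + a * u x 5 + b * u x 6))
              * Real.exp (sigma*x) := by ring
        rw [erw]
        exact mul_nonneg (mul_nonneg (mul_nonneg n0 (hbpos x hxJ).le) hQ) he.le
    intro t ht
    have h1 := hmono h0J ht ht.1
    have h2 : 0 < u 0 2 * Real.exp (sigma*0) := by
      rw [hu0e 2]
      positivity
    exact pos_of_mul_exp (Real.exp_pos (sigma*t)) (lt_of_lt_of_le h2 h1)
  -- strict positivity of the asymptomatic component on (0, T]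
  have hu3pos : ∀ t ∈ Ioc (0:ℝ) T, 0 < u t 3 := by
    have hstrict : StrictMonoOn (fun t => u t 3 * Real.exp (B * t)) (Icc 0 T) := by
      apply strictMonoOn_of_hasDerivWithinAt_pos (convex_Icc 0 T)
        ((hucont 3).mul (hexpc B))
        (f' := fun t => ((1 - p) * sigma * u t 2 - gA t * u t 3) * Real.exp (B*t)
          + u t 3 * (B * Real.exp (B*t)))
      · intro x hx
        rw [interior_Icc] at hx ⊢
        exact ((hd3 x (Ioo_subset_Icc_self hx)).mono Ioo_subset_Icc_self).mul
          (expmul_hasDerivAt B x).hasDerivWithinAt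
      · intro x hx
        rw [interior_Icc] at hx
        have hxJ := Ioo_subset_Icc_self hx
        obtain ⟨-, -, n3, -, -, -⟩ := hnn x hxJ
        obtain ⟨-, -, -, -, -, k6⟩ := hBfacts x hxJ
        have hu2 := hu2pos x hxJ
        have he := Real.exp_pos (B*x)
        have erw : ((1 - p) * sigma * u x 2 - gA x * u x 3) * Real.exp (B*x)
            + u x 3 * (B * Real.exp (B*x))
            = ((1 - p) * sigma * u x 2 + (B - gA x) * u x 3) * Real.exp (B*x) := by ring
        rw [erw]
        exact mul_pos (add_pos_of_pos_of_nonneg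
          (mul_pos (mul_pos (by linarith) hsigma) hu2)
          (mul_nonneg (by linarith) n3)) he
    intro t ht
    have htJ : t ∈ Icc (0:ℝ) T := ⟨ht.1.le, ht.2⟩
    have h1 := hstrict h0J htJ ht.1
    have h2 : 0 ≤ u 0 3 * Real.exp (B*0) := by
      rw [hu0e 3]
      exact mul_nonneg (hx₀ 3) (Real.exp_pos _).le
    exact pos_of_mul_exp (Real.exp_pos (B*t)) (lt_of_le_of_lt h2 h1)
  -- the parameters agree on (0, T]
  have hfinal : ∀ t ∈ Ioc (0:ℝ) T, beta t = betah t := by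
    intro t ht
    have htJ : t ∈ Icc (0:ℝ) T := ⟨ht.1.le, ht.2⟩
    obtain ⟨-, -, -, n4, n5, n6⟩ := hnn t htJ
    have hQpos : 0 < c * u t 3 + u t 4 + a * u t 5 + b * u t 6 := by
      have i1 := mul_pos hc (hu3pos t ht)
      have i2 := mul_nonneg ha.le n5
      have i3 := mul_nonneg hb.le n6
      linarith
    have heq : -(u t 0) * beta t * (c * u t 3 + u t 4 + a * u t 5 + b * u t 6) - nu t * u t 0
        = -(u t 0) * betah t * (c * u t 3 + u t 4 + a * u t 5 + b * u t 6) - nu t * u t 0 :=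
      UniqueDiffWithinAt.eq_deriv (Icc 0 T) (uniqueDiffOn_Icc hT t htJ)
        (hud 0 t htJ) (hud' 0 t htJ)
    have h2 : beta t * (u t 0 * (c * u t 3 + u t 4 + a * u t 5 + b * u t 6))
        = betah t * (u t 0 * (c * u t 3 + u t 4 + a * u t 5 + b * u t 6)) := by
      linear_combination -heq
    exact mul_right_cancel₀ (ne_of_gt (mul_pos (hu0pos t htJ) hQpos)) h2
  -- conclude, using continuity at `t = 0`
  intro t ht
  rcases eq_or_lt_of_le ht.1 with h0 | h0
  · subst h0
    have hclos : NeBot (nhdsWithin (0:ℝ) (Ioc 0 T)) := by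
      rw [← mem_closure_iff_nhdsWithin_neBot, closure_Ioc (ne_of_lt hT)]
      exact h0J
    have h1 : Tendsto beta (nhdsWithin (0:ℝ) (Ioc 0 T)) (nhds (beta 0)) :=
      (hbeta 0 h0J).mono Ioc_subset_Icc_self
    have h2 : Tendsto betah (nhdsWithin (0:ℝ) (Ioc 0 T)) (nhds (betah 0)) :=
      (hbetah 0 h0J).mono Ioc_subset_Icc_self
    have h3 : Tendsto beta (nhdsWithin (0:ℝ) (Ioc 0 T)) (nhds (betah 0)) :=
      Filter.Tendsto.congr' (eventually_nhdsWithin_of_forall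
        (fun x hx => (hfinal x hx).symm)) h2
    exact tendsto_nhds_unique h1 h3
  · exact hfinal t ⟨h0, ht.2⟩
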